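/- For a Young diagram $B$ with at most $N$ rows, $\prod_{1\leq i<j\leq N}\frac{((j-i+1)\beta)_{B_i-B_j}}{((j-i)\beta)_{B_i-B_j}} = \frac{[N\beta]_B}{G_{B,B}(0)}$, where $[x]_B = \prod_{(i,j)\in B}(x - \beta(i-1) + j - 1)$ and $G_{B,B}(0) = \prod_{(i,j)\in B}(\beta(B'_j - i) + (B_i - j) + \beta)$. -/

import Mathlib

open Finset

/-- Pochhammer symbol `(x)_k = x(x+1)⋯(x+k-1)` for a natural number `k`. -/
noncomputable def pochN (x : ℝ) (k : ℕ) : ℝ := ∏ m ∈ Finset.range k, (x + m)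

lemma pochN_zero (x : ℝ) : pochN x 0 = 1 := by simp [pochN]

lemma pochN_pos {x : ℝ} (hx : 0 < x) (k : ℕ) : 0 < pochN x k :=
  Finset.prod_pos fun m _ => by positivity

lemma pochN_nonneg {x : ℝ} (hx : 0 ≤ x) (k : ℕ) : 0 ≤ pochN x k :=
  Finset.prod_nonneg fun m _ => by positivity

lemma pochN_add (x : ℝ) (a b : ℕ) : pochN x (a + b) = pochN x a * pochN (x + a) b := by
  rw [pochN, Finset.prod_range_add]
  congr 1
  apply Finset.prod_congr rfl
  intro m _
  push_cast
  ring

/-- descending product reversed -/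
lemma prod_desc (C : ℝ) : ∀ m : ℕ, ∏ k ∈ Finset.range m, (C - (k : ℝ))
    = ∏ k ∈ Finset.range m, (C - (m : ℝ) + 1 + (k : ℝ))
  | 0 => by simp
  | (m+1) => by
    rw [Finset.prod_range_succ, prod_desc C m, Finset.prod_range_succ' (fun k => C - (↑(m+1)) + 1 + (k:ℝ)) m]
    push_cast
    congr 1
    · apply Finset.prod_congr rfl; intro k _; ring
    · ring

/-- telescoping lemma -/
lemma tele (β : ℝ) (hβ : 0 < β) (μ : ℕ → ℕ) (hμ : ∀ a b, a ≤ b → μ b ≤ μ a) :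
    ∀ n : ℕ, ∏ j ∈ Finset.range n,
        (pochN (((j:ℝ)+1)*β) (μ 0 - μ j) / pochN ((j:ℝ)*β) (μ 0 - μ j))
      = pochN ((n:ℝ)*β) (μ 0 - μ n) /
        ∏ j ∈ Finset.range n, pochN (((j:ℝ)+1)*β + ((μ 0 - μ j : ℕ):ℝ)) (μ j - μ (j+1))
  | 0 => by simp [pochN]
  | (n+1) => by
    rw [Finset.prod_range_succ, Finset.prod_range_succ, tele β hβ μ hμ n]
    have key : pochN ((↑(n+1) : ℝ)*β) (μ 0 - μ (n+1))
        = pochN ((↑(n+1) : ℝ)*β) (μ 0 - μ n)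
          * pochN ((↑(n+1):ℝ)*β + ((μ 0 - μ n : ℕ):ℝ)) (μ n - μ (n+1)) := by
      rw [← pochN_add]
      congr 1
      have h1 : μ n ≤ μ 0 := hμ 0 n (Nat.zero_le n)
      have h2 : μ (n+1) ≤ μ n := hμ n (n+1) (Nat.le_succ n)
      omega
    have hD : (∏ j ∈ Finset.range n, pochN (((j:ℝ)+1)*β + ((μ 0 - μ j : ℕ):ℝ)) (μ j - μ (j+1))) ≠ 0 := by
      apply Finset.prod_ne_zero_iff.2
      intro j _
      have : (0:ℝ) < ((j:ℝ)+1)*β + ((μ 0 - μ j : ℕ):ℝ) := by positivity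
      exact (pochN_pos this _).ne'
    have hA : pochN ((n:ℝ)*β) (μ 0 - μ n) ≠ 0 := by
      cases n with
      | zero => simp [pochN]
      | succ m =>
        have : (0:ℝ) < ((m+1:ℕ):ℝ)*β := by positivity
        exact (pochN_pos this _).ne'
    have hB2 : pochN (((n:ℝ)+1)*β + ((μ 0 - μ n : ℕ):ℝ)) (μ n - μ (n+1)) ≠ 0 := by
      have : (0:ℝ) < ((n:ℝ)+1)*β + ((μ 0 - μ n : ℕ):ℝ) := by positivity
      exact (pochN_pos this _).ne'
    push_cast at key ⊢
    rw [key]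
    field_simp
    ring_nf at hB2 ⊢
    rw [mul_inv_cancel_right₀ hB2]

/-- hook products row-by-row in blocks -/
lemma hookrow (β : ℝ) (μ : ℕ → ℕ) (hμ : ∀ a b, a ≤ b → μ b ≤ μ a) (c : ℕ → ℕ)
    (hc : ∀ m j, μ (m+1) ≤ j → j < μ m → c j = m + 1) :
    ∀ n : ℕ, ∏ j ∈ Finset.Ico (μ n) (μ 0), (β * (c j : ℝ) + ((μ 0 : ℝ) - (j:ℝ)) - 1)
      = ∏ t ∈ Finset.range n, pochN (((t:ℝ)+1)*β + ((μ 0 - μ t : ℕ):ℝ)) (μ t - μ (t+1))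
  | 0 => by simp
  | (n+1) => by
    rw [Finset.prod_range_succ, ← hookrow β μ hμ c hc n,
      ← Finset.prod_Ico_consecutive _ (hμ n (n+1) (Nat.le_succ n)) (hμ 0 n (Nat.zero_le n))]
    rw [mul_comm]
    congr 1
    -- ∏ j ∈ Ico (μ (n+1)) (μ n), f j = pochN (((n:ℝ)+1)*β + ↑(μ 0 - μ n)) (μ n - μ (n+1))
    have hab : μ (n+1) ≤ μ n := hμ n (n+1) (Nat.le_succ n)
    have h0 : μ n ≤ μ 0 := hμ 0 n (Nat.zero_le n)
    rw [Finset.prod_Ico_eq_prod_range]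
    have step1 : ∀ j ∈ Finset.range (μ n - μ (n+1)),
        (β * (c (μ (n+1) + j) : ℝ) + ((μ 0 : ℝ) - ((μ (n+1) + j : ℕ):ℝ)) - 1)
        = (β * ((n:ℝ)+1) + (μ 0 : ℝ) - (μ (n+1) : ℝ) - 1) - (j:ℝ) := by
      intro j hj
      rw [Finset.mem_range] at hj
      have hcj : c (μ (n+1) + j) = n + 1 := hc n _ (Nat.le_add_right _ _) (by omega)
      rw [hcj]
      push_cast
      ring
    rw [Finset.prod_congr rfl step1, prod_desc, pochN]
    apply Finset.prod_congr rfl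
    intro k hk
    have : ((μ n - μ (n+1) : ℕ):ℝ) = (μ n : ℝ) - (μ (n+1) : ℝ) := by
      push_cast [Nat.cast_sub hab]; ring
    rw [this]
    have : ((μ 0 - μ n : ℕ):ℝ) = (μ 0 : ℝ) - (μ n : ℝ) := by
      push_cast [Nat.cast_sub h0]; ring
    rw [this]
    ring

/-- decomposition of cells product -/
lemma cells_prod (N : ℕ) (B : YoungDiagram) (hB : B.colLen 0 ≤ N) (f : ℕ → ℕ → ℝ) :
    ∏ c ∈ B.cells, f c.1 c.2 = ∏ i ∈ Finset.range N, ∏ j ∈ Finset.range (B.rowLen i), f i j := by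
  have hcells : B.cells = (Finset.range N).biUnion
      (fun i => (Finset.range (B.rowLen i)).image (Prod.mk i)) := by
    ext ⟨i, j⟩
    simp only [YoungDiagram.mem_cells, Finset.mem_biUnion, Finset.mem_range, Finset.mem_image,
      Prod.mk.injEq]
    constructor
    · intro h
      have h1 : j < B.rowLen i := YoungDiagram.mem_iff_lt_rowLen.1 h
      have h2 : i < B.colLen j := YoungDiagram.mem_iff_lt_colLen.1 h
      have h3 : B.colLen j ≤ B.colLen 0 := B.colLen_anti 0 j (Nat.zero_le j)
      exact ⟨i, by omega, j, h1, rfl, rfl⟩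
    · rintro ⟨i', _, j', hj', rfl, rfl⟩
      exact YoungDiagram.mem_iff_lt_rowLen.2 hj'
  rw [hcells, Finset.prod_biUnion]
  · apply Finset.prod_congr rfl
    intro i _
    rw [Finset.prod_image]
    intro a _ b _ h
    simpa using h
  · intro a _ b _ hab
    simp only [Function.onFun]
    apply Finset.disjoint_left.2
    rintro ⟨x, y⟩ hx hy
    simp only [Finset.mem_image] at hx hy
    obtain ⟨_, _, h1⟩ := hx
    obtain ⟨_, _, h2⟩ := hy
    apply hab
    have e1 := congrArg Prod.fst h1
    have e2 := congrArg Prod.fst h2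
    simp at e1 e2
    omega


/-- For a Young diagram `B` with at most `N` rows,
`∏_{1≤i<j≤N} ((j-i+1)β)_{B_i-B_j} / ((j-i)β)_{B_i-B_j} = [Nβ]_B / G_{B,B}(0)`. -/
theorem stmt1 (N : ℕ) (B : YoungDiagram) (hB : B.colLen 0 ≤ N) (β : ℝ) (hβ : 0 < β) :
    ∏ j ∈ Finset.range N, ∏ i ∈ Finset.range j,
        pochN (((j : ℝ) - (i : ℝ) + 1) * β) (B.rowLen i - B.rowLen j) /
          pochN (((j : ℝ) - (i : ℝ)) * β) (B.rowLen i - B.rowLen j)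
      = (∏ c ∈ B.cells, ((N : ℝ) * β - β * (c.1 : ℝ) + (c.2 : ℝ))) /
        ∏ c ∈ B.cells,
          (β * ((B.colLen c.2 : ℝ) - ((c.1 : ℝ) + 1)) + ((B.rowLen c.1 : ℝ) - ((c.2 : ℝ) + 1)) + β) := by
  have hrowN : B.rowLen N = 0 := by
    by_contra h
    have h1 : (N, 0) ∈ B := YoungDiagram.mem_iff_lt_rowLen.2 (Nat.pos_of_ne_zero h)
    have h2 := YoungDiagram.mem_iff_lt_colLen.1 h1
    omega
  set A : ℕ → ℝ := fun i => pochN (((N:ℝ) - (i:ℝ))*β) (B.rowLen i) with hA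
  set H : ℕ → ℝ := fun i => ∏ t ∈ Finset.range (N - i),
      pochN (((t:ℝ)+1)*β + ((B.rowLen i - B.rowLen (i+t) : ℕ):ℝ))
        (B.rowLen (i+t) - B.rowLen (i+t+1)) with hH
  have hswap : (∏ j ∈ Finset.range N, ∏ i ∈ Finset.range j,
        pochN (((j : ℝ) - (i : ℝ) + 1) * β) (B.rowLen i - B.rowLen j) /
          pochN (((j : ℝ) - (i : ℝ)) * β) (B.rowLen i - B.rowLen j))
      = ∏ i ∈ Finset.range N, ∏ j ∈ Finset.Ico (i+1) N,
        (pochN (((j : ℝ) - (i : ℝ) + 1) * β) (B.rowLen i - B.rowLen j) /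
          pochN (((j : ℝ) - (i : ℝ)) * β) (B.rowLen i - B.rowLen j)) :=
    Finset.prod_comm' (fun x y => by simp only [Finset.mem_range, Finset.mem_Ico]; omega)
  rw [hswap]
  have key : ∀ i ∈ Finset.range N,
      (∏ j ∈ Finset.Ico (i+1) N,
        (pochN (((j : ℝ) - (i : ℝ) + 1) * β) (B.rowLen i - B.rowLen j) /
          pochN (((j : ℝ) - (i : ℝ)) * β) (B.rowLen i - B.rowLen j)))
      = A i / H i := by
    intro i hi
    rw [Finset.mem_range] at hi
    obtain ⟨m, hm⟩ : ∃ m, N - i = m + 1 := ⟨N - i - 1, by omega⟩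
    have hiN : i + m + 1 = N := by omega
    have htele := tele β hβ (fun t => B.rowLen (i+t))
      (fun a b hab => B.rowLen_anti _ _ (by omega)) (N - i)
    simp only [hm] at htele
    rw [Finset.prod_range_succ'] at htele
    simp only [Nat.add_zero, ← Nat.add_assoc, Nat.sub_self, Nat.cast_zero, pochN_zero,
      zero_add, zero_mul, mul_one, div_one] at htele
    rw [hiN, hrowN] at htele
    simp only [Nat.sub_zero] at htele
    push_cast at htele
    simp only [hA, hH, hm]
    rw [Finset.prod_Ico_eq_prod_range]
    have hm2 : N - (i + 1) = m := by omega
    rw [hm2]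
    have hcast : ((N:ℝ) - (i:ℝ)) * β = ((m:ℝ) + 1) * β := by
      have : (N:ℝ) = (i:ℝ) + (m:ℝ) + 1 := by exact_mod_cast congrArg (Nat.cast (R := ℝ)) hiN.symm
      rw [this]; ring
    rw [hcast, ← htele]
    apply Finset.prod_congr rfl
    intro j hj
    have e1 : i + 1 + j = i + j + 1 := by omega
    rw [e1]
    congr 2 <;> push_cast <;> ring
  rw [Finset.prod_congr rfl key, Finset.prod_div_distrib]
  congr 1
  · rw [cells_prod N B hB (fun i j => (N:ℝ)*β - β*(i:ℝ) + (j:ℝ))]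
    apply Finset.prod_congr rfl
    intro i _
    simp only [hA, pochN]
    apply Finset.prod_congr rfl
    intro j _
    ring
  · rw [cells_prod N B hB
      (fun i j => β*((B.colLen j:ℝ) - ((i:ℝ)+1)) + ((B.rowLen i:ℝ) - ((j:ℝ)+1)) + β)]
    apply Finset.prod_congr rfl
    intro i hi
    rw [Finset.mem_range] at hi
    have hc : ∀ m j, B.rowLen (i+(m+1)) ≤ j → j < B.rowLen (i+m) → B.colLen j - i = m + 1 := by
      intro m j h1 h2
      have ha : i + m < B.colLen j :=
        YoungDiagram.mem_iff_lt_colLen.1 (YoungDiagram.mem_iff_lt_rowLen.2 h2)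
      have hb : ¬ (i + (m+1) < B.colLen j) := fun hlt =>
        absurd (YoungDiagram.mem_iff_lt_rowLen.1 (YoungDiagram.mem_iff_lt_colLen.2 hlt))
          (by omega)
      omega
    have hhook := hookrow β (fun t => B.rowLen (i+t))
      (fun a b hab => B.rowLen_anti _ _ (by omega)) (fun j => B.colLen j - i) hc (N - i)
    simp only [Nat.add_zero, ← Nat.add_assoc] at hhook
    rw [Nat.add_sub_cancel' (le_of_lt hi), hrowN, ← Finset.range_eq_Ico] at hhook
    simp only [hH]
    rw [← hhook]
    apply Finset.prod_congr rfl
    intro j hj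
    rw [Finset.mem_range] at hj
    have hlt : i < B.colLen j :=
      YoungDiagram.mem_iff_lt_colLen.1 (YoungDiagram.mem_iff_lt_rowLen.2 hj)
    rw [Nat.cast_sub (le_of_lt hlt)]
    ring
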